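/- Run Algorithm 1 started at any x_0 ∈ ℝ with the parameter sequence t̃_k = (k+2)/2, producing iterates (x_k). Then f(x_k) → f* as k → ∞; that is, the function values of the gradient-restarted accelerated gradient method converge to the minimum value of f. -/

import Mathlib

open Filter Finset intervalIntegral

/-- The gradient step operator `T(y) = y - (1/L) f'(y)`. -/
noncomputable def gradStep (L : ℝ) (f : ℝ → ℝ) (y : ℝ) : ℝ := y - (1 / L) * deriv f y

/-- A parameter sequence for accelerated gradient descent:
`t 0 = 1`, `t k ≥ (k+2)/2` and `t k ^ 2 ≥ t (k+1) ^ 2 - t (k+1)`. -/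
def ParamSeq (t : ℕ → ℝ) : Prop :=
  t 0 = 1 ∧ ∀ k : ℕ, ((k : ℝ) + 2) / 2 ≤ t k ∧ (t (k + 1)) ^ 2 - t (k + 1) ≤ (t k) ^ 2

/-- The gradient restart condition `f'(y_k) (x_{k+1} - x_k) > 0` at iteration `k`. -/
def RestartAt (f : ℝ → ℝ) (x y : ℕ → ℝ) (k : ℕ) : Prop :=
  0 < deriv f (y k) * (x (k + 1) - x k)

/-- `IsAlgo1 L f tt x0 x y t` : the sequences `x`, `y`, `t` are generated by Algorithm 1
(AGD with gradient restarts) with parameter sequence `tt`, started at `x0`.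
The counter `c` keeps track of the position in the parameter sequence; it is reset to `0`
whenever the gradient restart condition is triggered, which realizes the reset
`t_{k+1+m} := tt_m` of the parameters. -/
def IsAlgo1 (L : ℝ) (f : ℝ → ℝ) (tt : ℕ → ℝ) (x0 : ℝ) (x y t : ℕ → ℝ) : Prop :=
  x 0 = x0 ∧ y 0 = x0 ∧
  (∀ k, x (k + 1) = gradStep L f (y k)) ∧
  ∃ c : ℕ → ℕ, c 0 = 0 ∧ (∀ k, t k = tt (c k)) ∧
    ∀ k,
      (deriv f (y k) * (x (k + 1) - x k) ≤ 0 →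
        y (k + 1) = x (k + 1) + ((t k - 1) / t (k + 1)) * (x (k + 1) - x k) ∧
          c (k + 1) = c k + 1) ∧
      (0 < deriv f (y k) * (x (k + 1) - x k) →
        y (k + 1) = x (k + 1) ∧ c (k + 1) = 0)

section auxlemmas
variable {L : ℝ} {f : ℝ → ℝ}

private lemma deriv_lip_cont (hL : 0 < L)
    (hlip : ∀ a b : ℝ, |deriv f a - deriv f b| ≤ L * |a - b|) :
    Continuous (deriv f) := by
  refine (LipschitzWith.continuous (K := Real.toNNReal L) (f := deriv f) ?_)
  refine lipschitzWith_iff_dist_le_mul.mpr fun a b => ?_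
  rw [Real.dist_eq, Real.dist_eq, Real.coe_toNNReal _ hL.le]
  exact hlip a b

private lemma supportLine (hconv : ConvexOn ℝ Set.univ f) (hdiff : Differentiable ℝ f)
    (p q : ℝ) : f p + deriv f p * (q - p) ≤ f q := by
  rcases lt_trichotomy p q with h | h | h
  · have := hconv.deriv_le_slope (Set.mem_univ p) (Set.mem_univ q) h (hdiff p)
    rw [slope_def_field] at this
    have h2 := (le_div_iff₀ (by linarith : (0:ℝ) < q - p)).mp this
    linarith
  · subst h; simp
  · have := hconv.slope_le_deriv (Set.mem_univ q) (Set.mem_univ p) h (hdiff p)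
    rw [slope_def_field] at this
    have h2 := (div_le_iff₀ (by linarith : (0:ℝ) < p - q)).mp this
    linarith

private lemma descentLemma (hL : 0 < L) (hdiff : Differentiable ℝ f)
    (hlip : ∀ a b : ℝ, |deriv f a - deriv f b| ≤ L * |a - b|) (a b : ℝ) :
    f b ≤ f a + deriv f a * (b - a) + L / 2 * (b - a) ^ 2 := by
  have hg : Continuous (deriv f) := deriv_lip_cont hL hlip
  have hftc : ∀ u v : ℝ, ∫ t in u..v, deriv f t = f v - f u := fun u v =>
    integral_deriv_eq_sub (fun x _ => hdiff x) (hg.intervalIntegrable u v)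
  rcases le_or_gt a b with hab | hab
  · have hmono : ∫ t in a..b, deriv f t ≤ ∫ t in a..b, (deriv f a + L * (t - a)) := by
      refine integral_mono_on hab (hg.intervalIntegrable a b)
        ((by fun_prop : Continuous fun t : ℝ => deriv f a + L * (t - a)).intervalIntegrable a b)
        fun t ht => ?_
      have h1 := hlip t a
      have h2 : |t - a| = t - a := abs_of_nonneg (by linarith [ht.1])
      have h3 : deriv f t - deriv f a ≤ |deriv f t - deriv f a| := le_abs_self _
      rw [h2] at h1; linarith
    have hcomp : ∫ t in a..b, (deriv f a + L * (t - a)) =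
        deriv f a * (b - a) + L / 2 * (b - a) ^ 2 := by
      rw [integral_add (intervalIntegrable_const)
        (((by fun_prop : Continuous fun t : ℝ => L * (t - a))).intervalIntegrable a b),
        integral_const_mul, integral_sub intervalIntegrable_id intervalIntegrable_const,
        integral_id, integral_const, integral_const]
      simp [smul_eq_mul]; ring
    have := hftc a b; rw [this] at hmono; rw [hcomp] at hmono; linarith
  · have hmono : ∫ t in b..a, (deriv f a - L * (a - t)) ≤ ∫ t in b..a, deriv f t := by
      refine integral_mono_on hab.le
        ((by fun_prop : Continuous fun t : ℝ => deriv f a - L * (a - t)).intervalIntegrable b a)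
        (hg.intervalIntegrable b a) fun t ht => ?_
      have h1 := hlip a t
      have h2 : |a - t| = a - t := abs_of_nonneg (by linarith [ht.2])
      have h3 : deriv f a - deriv f t ≤ |deriv f a - deriv f t| := le_abs_self _
      rw [h2] at h1; linarith
    have hcomp : ∫ t in b..a, (deriv f a - L * (a - t)) =
        deriv f a * (a - b) - L / 2 * (a - b) ^ 2 + L * (a-b)^2 - L*(a-b)^2 := by
      rw [integral_sub (intervalIntegrable_const)
        (((by fun_prop : Continuous fun t : ℝ => L * (a - t))).intervalIntegrable b a),
        integral_const_mul, integral_sub intervalIntegrable_const intervalIntegrable_id,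
        integral_id, integral_const, integral_const]
      simp [smul_eq_mul]; ring
    have := hftc b a; rw [this] at hmono; rw [hcomp] at hmono; nlinarith [sq_nonneg (a-b)]

private lemma keyIneq (hL : 0 < L) (hconv : ConvexOn ℝ Set.univ f)
    (hdiff : Differentiable ℝ f)
    (hlip : ∀ a b : ℝ, |deriv f a - deriv f b| ≤ L * |a - b|) (yv u : ℝ) :
    f (gradStep L f yv) ≤ f u + L * (yv - gradStep L f yv) * (yv - u)
      - L / 2 * (yv - gradStep L f yv) ^ 2 := by
  have hgs : yv - gradStep L f yv = deriv f yv / L := by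
    unfold gradStep; field_simp; ring
  have h1 := descentLemma hL hdiff hlip yv (gradStep L f yv)
  have h2 := supportLine hconv hdiff yv u
  rw [hgs]
  have hd : gradStep L f yv - yv = -(deriv f yv / L) := by rw [← hgs]; ring
  rw [hd] at h1
  have e1 : L * (deriv f yv / L) * (yv - u) = deriv f yv * (yv - u) := by field_simp
  have e2 : L / 2 * (deriv f yv / L) ^ 2 = deriv f yv ^ 2 / (2 * L) := by field_simp
  rw [e1, e2]
  have e3 : deriv f yv * -(deriv f yv / L) + L / 2 * (-(deriv f yv / L)) ^ 2
      = - (deriv f yv ^2 / (2*L)) := by field_simp; ring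
  nlinarith [h1, h2]

set_option maxHeartbeats 1000000 in
private lemma restartBound (hL : 0 < L) (hconv : ConvexOn ℝ Set.univ f)
    (hdiff : Differentiable ℝ f)
    (hlip : ∀ a b : ℝ, |deriv f a - deriv f b| ≤ L * |a - b|)
    (xstar : ℝ) (hmin : ∀ z, f xstar ≤ f z)
    (yj yk xj xk xk1 β : ℝ) (hβ : 0 ≤ β)
    (hxk : xk = yj - 1 / L * deriv f yj)
    (hxk1 : xk1 = yk - 1 / L * deriv f yk)
    (hyk : yk = xk + β * (xk - xj))
    (hnr : deriv f yj * (xk - xj) ≤ 0)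
    (hr : 0 < deriv f yk * (xk1 - xk)) :
    f xk1 - f xstar ≤ L * (xk1 - xk) ^ 2 := by
  have hL' : L ≠ 0 := ne_of_gt hL
  have hcont : Continuous (deriv f) := deriv_lip_cont hL hlip
  have hgk : deriv f yk = L * (yk - xk1) := by rw [hxk1]; field_simp; ring
  have hgj : deriv f yj = L * (yj - xk) := by rw [hxk]; field_simp; ring
  rcases mul_pos_iff.mp hr with ⟨hgpos, hdpos⟩ | ⟨hgneg, hdneg⟩
  · have hyx : 0 < yk - xk := by nlinarith [hgk]
    have hdj : 0 < xk - xj := by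
      by_contra hcon
      push_neg at hcon
      have h := mul_nonpos_of_nonneg_of_nonpos hβ (by linarith : xk - xj ≤ 0)
      rw [hyk] at hyx; linarith
    have hgyj : deriv f yj ≤ 0 := by nlinarith [hnr]
    have hxyj : 0 ≤ xk - yj := by nlinarith [hgj]
    have hgxk : deriv f xk ≤ 0 := by
      have h1 := hlip xk yj
      rw [abs_of_nonneg hxyj] at h1
      have h3 := le_abs_self (deriv f xk - deriv f yj)
      nlinarith [hgj]
    have h5' : 0 ≤ yk - xk1 := by nlinarith [hgk]
    have hgxk1 : 0 ≤ deriv f xk1 := by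
      have h1 := hlip yk xk1
      rw [abs_of_nonneg h5'] at h1
      have h3 := le_abs_self (deriv f yk - deriv f xk1)
      nlinarith [hgk]
    have hle : xk ≤ xk1 := by linarith
    obtain ⟨ξ, hmem, hξ⟩ := intermediate_value_Icc hle hcont.continuousOn
      (Set.mem_Icc.mpr ⟨hgxk, hgxk1⟩)
    have hfξ : f ξ = f xstar := by
      have h1 := supportLine hconv hdiff ξ xstar
      rw [hξ] at h1
      simp at h1
      exact le_antisymm (by linarith) (hmin ξ)
    have h2 := supportLine hconv hdiff xk1 ξ
    have h3 := hlip xk1 ξ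
    rw [hξ, sub_zero, abs_of_nonneg (by linarith [hmem.2] : (0:ℝ) ≤ xk1 - ξ)] at h3
    have hA : deriv f xk1 ≤ L * (xk1 - ξ) := le_trans (le_abs_self _) h3
    have hB : xk1 - ξ ≤ xk1 - xk := by linarith [hmem.1]
    have hC : 0 ≤ xk1 - ξ := by linarith [hmem.2]
    have hD : f xk1 - f ξ ≤ deriv f xk1 * (xk1 - ξ) := by nlinarith [h2]
    have hE := mul_le_mul_of_nonneg_right hA hC
    have hF : (xk1 - ξ) * (xk1 - ξ) ≤ (xk1 - xk) * (xk1 - xk) :=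
      mul_le_mul hB hB hC (by linarith)
    have hG := mul_le_mul_of_nonneg_left hF hL.le
    nlinarith [hD, hE, hG, hfξ]
  · have hyx : yk - xk < 0 := by nlinarith [hgk]
    have hdj : xk - xj < 0 := by
      by_contra hcon
      push_neg at hcon
      have h := mul_nonneg hβ (by linarith : (0:ℝ) ≤ xk - xj)
      rw [hyk] at hyx; linarith
    have hgyj : 0 ≤ deriv f yj := by nlinarith [hnr]
    have hxyj : 0 ≤ yj - xk := by nlinarith [hgj]
    have hgxk : 0 ≤ deriv f xk := by
      have h1 := hlip yj xk
      rw [abs_of_nonneg hxyj] at h1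
      have h3 := le_abs_self (deriv f yj - deriv f xk)
      nlinarith [hgj]
    have h5' : 0 ≤ xk1 - yk := by nlinarith [hgk]
    have hgxk1 : deriv f xk1 ≤ 0 := by
      have h1 := hlip xk1 yk
      rw [abs_of_nonneg h5'] at h1
      have h3 := le_abs_self (deriv f xk1 - deriv f yk)
      nlinarith [hgk]
    have hle : xk1 ≤ xk := by linarith
    obtain ⟨ξ, hmem, hξ⟩ := intermediate_value_Icc hle hcont.continuousOn
      (Set.mem_Icc.mpr ⟨hgxk1, hgxk⟩)
    have hfξ : f ξ = f xstar := by
      have h1 := supportLine hconv hdiff ξ xstar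
      rw [hξ] at h1
      simp at h1
      exact le_antisymm (by linarith) (hmin ξ)
    have h2 := supportLine hconv hdiff xk1 ξ
    have h3 := hlip xk1 ξ
    rw [hξ, sub_zero, abs_of_nonpos (by linarith [hmem.1] : xk1 - ξ ≤ 0)] at h3
    have hA : -deriv f xk1 ≤ L * (ξ - xk1) := by
      have := neg_le_abs (deriv f xk1)
      have he : -(xk1 - ξ) = ξ - xk1 := by ring
      rw [he] at h3
      linarith
    have hB : ξ - xk1 ≤ xk - xk1 := by linarith [hmem.2]
    have hC : 0 ≤ ξ - xk1 := by linarith [hmem.1]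
    have hD : f xk1 - f ξ ≤ (-deriv f xk1) * (ξ - xk1) := by nlinarith [h2]
    have hE := mul_le_mul_of_nonneg_right hA hC
    have hF : (ξ - xk1) * (ξ - xk1) ≤ (xk - xk1) * (xk - xk1) :=
      mul_le_mul hB hB hC (by linarith)
    have hG := mul_le_mul_of_nonneg_left hF hL.le
    nlinarith [hD, hE, hG, hfξ]

private lemma fistaStep
    (hkey : ∀ yv u : ℝ, f (gradStep L f yv) ≤ f u + L * (yv - gradStep L f yv) * (yv - u)
      - L / 2 * (yv - gradStep L f yv) ^ 2)
    (T xk u yv : ℝ) (hT : 1 ≤ T) :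
    2 * T ^ 2 * (f (gradStep L f yv) - f u)
      + L * (T * gradStep L f yv - (T - 1) * xk - u) ^ 2
    ≤ 2 * (T ^ 2 - T) * (f xk - f u)
      + L * (T * yv - (T - 1) * xk - u) ^ 2 := by
  have hk1 := hkey yv xk
  have hk2 := hkey yv u
  have hA := mul_le_mul_of_nonneg_left hk1 (by nlinarith : (0:ℝ) ≤ T ^ 2 - T)
  have hB := mul_le_mul_of_nonneg_left hk2 (by linarith : (0:ℝ) ≤ T)
  nlinarith [hA, hB]

end auxlemmas

set_option maxHeartbeats 1000000 in
theorem stmt7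
    (L : ℝ) (hL : 0 < L) (f : ℝ → ℝ)
    (hconv : ConvexOn ℝ Set.univ f) (hdiff : Differentiable ℝ f)
    (hlip : ∀ a b : ℝ, |deriv f a - deriv f b| ≤ L * |a - b|)
    (x0 : ℝ) (x y t : ℕ → ℝ)
    (halg : IsAlgo1 L f (fun k => ((k : ℝ) + 2) / 2) x0 x y t)
    (xstar : ℝ) (hmin : IsMinOn f Set.univ xstar) :
    Filter.Tendsto (fun k => f (x k)) Filter.atTop (nhds (f xstar)) := by
  obtain ⟨hx0, hy0, hstep, c, hc0, htc, hupd⟩ := halg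
  have hL' : L ≠ 0 := ne_of_gt hL
  have hfstar : ∀ z, f xstar ≤ f z := fun z => hmin (Set.mem_univ z)
  have key := keyIneq hL hconv hdiff hlip
  have hgy : ∀ k, deriv f (y k) = L * (y k - x (k + 1)) := by
    intro k; rw [hstep k]; unfold gradStep; field_simp; ring
  have htcR : ∀ k, t k = ((c k : ℝ) + 2) / 2 := fun k => htc k
  obtain ⟨V, hVdef⟩ : ∃ V : ℕ → ℝ, V = fun k => f (x (k + 1)) + L / 2 * (x (k + 1) - x k) ^ 2 :=
    ⟨_, rfl⟩
  have hstepV : ∀ k : ℕ, f (x (k + 1 + 1)) + L / 2 * (x (k + 1 + 1) - x (k + 1)) ^ 2 ≤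
      f (x (k + 1)) + L / 2 * (y (k + 1) - x (k + 1)) ^ 2 := by
    intro k
    have h := key (y (k + 1)) (x (k + 1))
    rw [← hstep (k + 1)] at h
    nlinarith [h]
  have hbeta : ∀ k : ℕ, (y (k + 1) - x (k + 1)) ^ 2 ≤ (x (k + 1) - x k) ^ 2 := by
    intro k
    rcases le_or_gt (deriv f (y k) * (x (k + 1) - x k)) 0 with hr | hr
    · obtain ⟨hy', hc'⟩ := (hupd k).1 hr
      rw [hy']
      have hck : t k = ((c k : ℝ) + 2) / 2 := htcR k
      have hck1 : t (k + 1) = ((c k : ℝ) + 1 + 2) / 2 := by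
        rw [htcR (k + 1), hc']; push_cast; ring
      have ht1pos : (0 : ℝ) < t (k + 1) := by rw [hck1]; positivity
      have h0 : (0 : ℝ) ≤ (t k - 1) / t (k + 1) := by
        apply div_nonneg _ ht1pos.le
        rw [hck]
        have : (0:ℝ) ≤ (c k : ℝ) := Nat.cast_nonneg _
        linarith
      have h1 : (t k - 1) / t (k + 1) ≤ 1 := by
        rw [div_le_one ht1pos, hck, hck1]; linarith
      have e : (x (k + 1) + (t k - 1) / t (k + 1) * (x (k + 1) - x k) - x (k + 1)) ^ 2
          = ((t k - 1) / t (k + 1)) ^ 2 * (x (k + 1) - x k) ^ 2 := by ring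
      rw [e]
      have hb2 : ((t k - 1) / t (k + 1)) ^ 2 ≤ 1 := by nlinarith [h0, h1]
      nlinarith [mul_le_mul_of_nonneg_right hb2 (sq_nonneg (x (k + 1) - x k))]
    · obtain ⟨hy', _⟩ := (hupd k).2 hr
      rw [hy']
      simp
      positivity
  have hVmono : ∀ k, V (k + 1) ≤ V k := by
    intro k
    have h1 := hstepV k
    have h2 := hbeta k
    simp only [hVdef]
    nlinarith [h1, h2, mul_le_mul_of_nonneg_left h2 (by positivity : (0:ℝ) ≤ L / 2)]
  have hVanti : Antitone V := antitone_nat_of_succ_le hVmono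
  have hVdrop : ∀ k, 0 < deriv f (y k) * (x (k + 1) - x k) →
      V (k + 1) ≤ V k - L / 2 * (x (k + 1) - x k) ^ 2 := by
    intro k hr
    obtain ⟨hy', _⟩ := (hupd k).2 hr
    have h1 := hstepV k
    rw [hy'] at h1
    simp only [sub_self] at h1
    simp only [hVdef]
    nlinarith [h1]
  have hrestart : ∀ k, 0 < deriv f (y k) * (x (k + 1) - x k) →
      f (x (k + 1)) - f xstar ≤ L * (x (k + 1) - x k) ^ 2 := by
    intro k hr
    have hynx : y k ≠ x k := by
      intro h
      have hg := hgy k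
      rw [h] at hg hr
      rw [hg] at hr
      nlinarith [mul_nonneg hL.le (sq_nonneg (x (k + 1) - x k))]
    obtain ⟨j, rfl⟩ : ∃ j, k = j + 1 := by
      cases k with
      | zero => exact absurd (hy0.trans hx0.symm) hynx
      | succ j => exact ⟨j, rfl⟩
    have hnr : deriv f (y j) * (x (j + 1) - x j) ≤ 0 := by
      by_contra hcon
      push_neg at hcon
      exact hynx ((hupd j).2 hcon).1
    obtain ⟨hyj, hcj⟩ := (hupd j).1 hnr
    have hck : t j = ((c j : ℝ) + 2) / 2 := htcR j
    have hck1 : t (j + 1) = ((c j : ℝ) + 1 + 2) / 2 := by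
      rw [htcR (j + 1), hcj]; push_cast; ring
    have ht1pos : (0 : ℝ) < t (j + 1) := by rw [hck1]; positivity
    have hb0 : (0 : ℝ) ≤ (t j - 1) / t (j + 1) := by
      apply div_nonneg _ ht1pos.le
      rw [hck]
      have : (0:ℝ) ≤ (c j : ℝ) := Nat.cast_nonneg _
      linarith
    exact restartBound hL hconv hdiff hlip xstar hfstar (y j) (y (j + 1)) (x j)
      (x (j + 1)) (x (j + 1 + 1)) ((t j - 1) / t (j + 1)) hb0
      (by rw [hstep j]; rfl) (by rw [hstep (j + 1)]; rfl) hyj hnr hr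
  have hVlb : ∀ k, f xstar ≤ V k := by
    intro k
    have h := hfstar (x (k + 1))
    have h2 : (0:ℝ) ≤ L / 2 * (x (k + 1) - x k) ^ 2 := by positivity
    simp only [hVdef]
    linarith
  have hbdd : BddBelow (Set.range V) := ⟨f xstar, by rintro _ ⟨k, rfl⟩; exact hVlb k⟩
  have hVinf_le : ∀ k, (⨅ i, V i) ≤ V k := fun k => ciInf_le hbdd k
  have hVinf_ge : f xstar ≤ ⨅ i, V i := le_ciInf hVlb
  have hVtend : Tendsto V atTop (nhds (⨅ i, V i)) := tendsto_atTop_ciInf hVanti hbdd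
  by_cases hinf : ∀ N, ∃ k, N ≤ k ∧ 0 < deriv f (y k) * (x (k + 1) - x k)
  · -- infinitely many restarts
    have hVi : (⨅ i, V i) ≤ f xstar := by
      refine le_of_forall_pos_le_add fun ε hε => ?_
      obtain ⟨k0, hk0⟩ := exists_lt_of_ciInf_lt
        (lt_add_of_pos_right (⨅ i, V i) (by linarith : (0:ℝ) < ε/3))
      obtain ⟨k, hkge, hkr⟩ := hinf k0
      have h1 : V k ≤ V k0 := hVanti hkge
      have h2 := hVdrop k hkr
      have h3 := hVinf_le (k + 1)
      have h4 := hrestart k hkr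
      have h6 : V k = f (x (k + 1)) + L / 2 * (x (k + 1) - x k) ^ 2 := by rw [hVdef]
      nlinarith [h1, h2, h3, h4, hk0, h6]
    have hVeq : (⨅ i, V i) = f xstar := le_antisymm hVi hVinf_ge
    rw [hVeq] at hVtend
    have hsq : Tendsto (fun n => f (x (n + 1))) atTop (nhds (f xstar)) := by
      refine tendsto_of_tendsto_of_tendsto_of_le_of_le tendsto_const_nhds hVtend
        (fun n => hfstar _) (fun n => ?_)
      have h6 : V n = f (x (n + 1)) + L / 2 * (x (n + 1) - x n) ^ 2 := by rw [hVdef]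
      have h2 : (0:ℝ) ≤ L / 2 * (x (n + 1) - x n) ^ 2 := by positivity
      nlinarith [h6, h2]
    exact (tendsto_add_atTop_iff_nat 1).mp hsq
  · -- finitely many restarts
    push_neg at hinf
    obtain ⟨N, hN⟩ := hinf
    obtain ⟨K, hcK, hyK, hnor⟩ : ∃ K, c K = 0 ∧ y K = x K ∧
        ∀ k, K ≤ k → deriv f (y k) * (x (k + 1) - x k) ≤ 0 := by
      classical
      by_cases hex : ∃ m, 0 < deriv f (y m) * (x (m + 1) - x m)
      · obtain ⟨m, hm⟩ := hex
        have hmN : m ≤ N := by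
          by_contra hcon
          push_neg at hcon
          exact absurd hm (not_lt.mpr (hN m hcon.le))
        haveI : DecidablePred (fun i => 0 < deriv f (y i) * (x (i + 1) - x i)) :=
          Classical.decPred _
        set M := Nat.findGreatest (fun i => 0 < deriv f (y i) * (x (i + 1) - x i)) N with hM
        have hPM : 0 < deriv f (y M) * (x (M + 1) - x M) :=
          Nat.findGreatest_spec (P := fun i => 0 < deriv f (y i) * (x (i + 1) - x i)) hmN hm
        refine ⟨M + 1, ((hupd M).2 hPM).2, ((hupd M).2 hPM).1, fun k hk => ?_⟩
        rcases le_or_gt k N with hkN | hkN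
        · exact not_lt.mp (Nat.findGreatest_is_greatest
            (P := fun i => 0 < deriv f (y i) * (x (i + 1) - x i)) hk hkN)
        · exact hN k hkN.le
      · push_neg at hex
        exact ⟨0, hc0, hy0.trans hx0.symm, fun k _ => hex k⟩
    have hcKj : ∀ j, c (K + j) = j := by
      intro j
      induction j with
      | zero => simpa using hcK
      | succ n ih =>
        have h := ((hupd (K + n)).1 (hnor _ (Nat.le_add_right K n))).2
        have e : K + (n + 1) = (K + n) + 1 := rfl
        rw [e, h, ih]
    obtain ⟨T, hT⟩ : ∃ T : ℕ → ℝ, T = fun j : ℕ => ((j : ℝ) + 2) / 2 := ⟨_, rfl⟩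
    have htK : ∀ j, t (K + j) = T j := by
      intro j; rw [htcR, hcKj, hT]
    have hT1 : ∀ j, (1 : ℝ) ≤ T j := by
      intro j
      simp only [hT]
      have : (0:ℝ) ≤ (j : ℝ) := Nat.cast_nonneg _
      linarith
    have hTpos : ∀ j, (0 : ℝ) < T j := fun j => lt_of_lt_of_le one_pos (hT1 j)
    have perstep : ∀ j : ℕ,
        2 * (T j) ^ 2 * (f (x (K + j + 1)) - f xstar)
          + L * (T j * x (K + j + 1) - (T j - 1) * x (K + j) - xstar) ^ 2
        ≤ 2 * ((T j) ^ 2 - T j) * (f (x (K + j)) - f xstar)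
          + L * (T j * y (K + j) - (T j - 1) * x (K + j) - xstar) ^ 2 := by
      intro j
      have h := fistaStep key (T j) (x (K + j)) xstar (y (K + j)) (hT1 j)
      rw [← hstep (K + j)] at h
      exact h
    have vsucc : ∀ j : ℕ,
        T (j + 1) * y (K + (j + 1)) - (T (j + 1) - 1) * x (K + (j + 1)) - xstar
        = T j * x (K + j + 1) - (T j - 1) * x (K + j) - xstar := by
      intro j
      have hyj := ((hupd (K + j)).1 (hnor _ (Nat.le_add_right K j))).1
      have e : K + (j + 1) = (K + j) + 1 := rfl
      rw [e, hyj, htK j]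
      have e2 : t (K + j + 1) = T (j + 1) := htK (j + 1)
      rw [e2]
      have hne : T (j + 1) ≠ 0 := ne_of_gt (hTpos (j + 1))
      field_simp
      ring
    have Tsucc : ∀ j : ℕ, (T (j + 1)) ^ 2 - T (j + 1) ≤ (T j) ^ 2 := by
      intro j
      simp only [hT]
      push_cast
      nlinarith [sq_nonneg ((j:ℝ))]
    obtain ⟨P, hPdef⟩ : ∃ P : ℕ → ℝ, P = fun j => 2 * (T j) ^ 2 * (f (x (K + j + 1)) - f xstar)
      + L * (T j * x (K + j + 1) - (T j - 1) * x (K + j) - xstar) ^ 2 := ⟨_, rfl⟩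
    have hT0 : T 0 = 1 := by rw [hT]; norm_num
    have hP0 : P 0 ≤ L * (x K - xstar) ^ 2 := by
      have h := perstep 0
      simp only [Nat.add_zero] at h
      rw [hT0, hyK] at h
      simp only [hPdef, Nat.add_zero, hT0]
      nlinarith [h]
    have hPmono : ∀ j, P (j + 1) ≤ P j := by
      intro j
      have h1 := perstep (j + 1)
      have h2 := vsucc j
      have h3 := Tsucc j
      have h4 : f xstar ≤ f (x (K + j + 1)) := hfstar _
      have e : K + (j + 1) = K + j + 1 := rfl
      rw [e] at h1 h2
      rw [h2] at h1
      have h5 := mul_le_mul_of_nonneg_right h3 (sub_nonneg.mpr h4)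
      simp only [hPdef]
      have e2 : K + (j + 1) = K + j + 1 := rfl
      rw [e2]
      nlinarith [h1, h5]
    have hPle : ∀ j, P j ≤ L * (x K - xstar) ^ 2 := by
      intro j
      induction j with
      | zero => exact hP0
      | succ n ih => exact le_trans (hPmono n) ih
    have hdelta : ∀ j : ℕ, f (x (K + j + 1)) - f xstar
        ≤ 2 * (L * (x K - xstar) ^ 2) / (((j : ℝ) + 2) ^ 2) := by
      intro j
      have h1 := hPle j
      have h2 : (0:ℝ) ≤ L * (T j * x (K + j + 1) - (T j - 1) * x (K + j) - xstar) ^ 2 := by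
        positivity
      have h3 : 2 * (T j) ^ 2 * (f (x (K + j + 1)) - f xstar) ≤ L * (x K - xstar) ^ 2 := by
        simp only [hPdef] at h1
        linarith
      have h4 : f xstar ≤ f (x (K + j + 1)) := hfstar _
      have h5 : (T j) ^ 2 = (((j : ℝ) + 2) / 2) ^ 2 := by rw [hT]
      have h6 : (0:ℝ) < ((j : ℝ) + 2) ^ 2 := by positivity
      rw [le_div_iff₀ h6]
      rw [h5] at h3
      nlinarith [h3, h4]
    have hBtend : Tendsto (fun n : ℕ => 2 * (L * (x K - xstar) ^ 2) / (((n : ℝ) + 2) ^ 2))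
        atTop (nhds 0) := by
      apply Tendsto.div_atTop tendsto_const_nhds
      exact (tendsto_pow_atTop two_ne_zero).comp
        (tendsto_atTop_add_const_right _ 2 tendsto_natCast_atTop_atTop)
    have hsq : Tendsto (fun n => f (x (n + (K + 1)))) atTop (nhds (f xstar)) := by
      have hup : Tendsto
          (fun n : ℕ => f xstar + 2 * (L * (x K - xstar) ^ 2) / (((n : ℝ) + 2) ^ 2))
          atTop (nhds (f xstar)) := by
        have h := hBtend.const_add (f xstar)
        simpa using h
      refine tendsto_of_tendsto_of_tendsto_of_le_of_le tendsto_const_nhds hup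
        (fun n => hfstar _) (fun n => ?_)
      have e : n + (K + 1) = K + n + 1 := by omega
      rw [e]
      linarith [hdelta n]
    exact (tendsto_add_atTop_iff_nat (K + 1)).mp hsq
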